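/- Let δ and δ̄ be two equivalent families as in the context, with P_ε^x(u) = (δ_ε^x)⁻¹(δ̄_ε^x(u)) → P^x(u) and Q_ε^x(u) = (δ̄_ε^x)⁻¹(δ_ε^x(u)) → Q^x(u) uniformly on compact sets, and suppose the induced sum operations converge uniformly on compact sets: Σ_ε^x(u,v) → Σ^x(u,v) and Σ̄_ε^x(u,v) → Σ̄^x(u,v), with Q^x continuous. Then for all x, u, v ∈ X: Σ̄^x(u, v) = Q^x( Σ^x( P^x(u), P^x(v) ) ). -/

import Mathlib

open Filter Topology

/-- Auxiliary: uniform-on-compacts convergence of eventually-continuous maps lets us pass to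
limits along a moving point. -/
theorem aux_comp_tendsto {α β : Type*} [TopologicalSpace α] [WeaklyLocallyCompactSpace α]
    [UniformSpace β] {l : Filter ℝ} [l.NeBot] {F : ℝ → α → β} {f : α → β}
    (hF : ∀ K : Set α, IsCompact K → TendstoUniformlyOn F f l K)
    (hFc : ∀ᶠ ε in l, Continuous (F ε))
    {g : ℝ → α} {a : α} (hg : Tendsto g l (𝓝 a)) :
    Tendsto (fun ε => F ε (g ε)) l (𝓝 (f a)) := by
  obtain ⟨K, hKc, hKmem⟩ := exists_compact_mem_nhds a
  have hU := hF K hKc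
  have hfc : ContinuousOn f K := hU.continuousOn (hFc.mono fun ε h => h.continuousOn).frequently
  exact hU.tendsto_comp (hfc.continuousWithinAt (mem_of_mem_nhds hKmem))
    (tendsto_nhdsWithin_iff.mpr ⟨hg, hg hKmem⟩)

/-- Let `δ` and `δ'` (written `δ̄` in the text) be two equivalent
families of dilatations on `X`, with `P_ε^x → P^x` and `Q_ε^x → Q^x` uniformly on
compact sets, and suppose the sum operations converge uniformly on compact sets:
`Σ_ε^x → Σ^x`, `Σ̄_ε^x → Σ̄^x`, with each `Q^x` continuous. Then for all `x, u, v`: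
`Σ̄^x(u, v) = Q^x( Σ^x( P^x(u), P^x(v) ) )`. -/
theorem equivalent_tangent_bundles_isomorphic
    {X : Type*} [MetricSpace X] [CompleteSpace X] [LocallyCompactSpace X]
    (δ δ' : ℝ → X → X → X)
    (hcomp : ∀ ε μ : ℝ, 0 < ε → 0 < μ → ∀ x y : X, δ ε x (δ μ x y) = δ (ε * μ) x y)
    (hone : ∀ x y : X, δ 1 x y = y)
    (hfix : ∀ ε : ℝ, 0 < ε → ∀ x : X, δ ε x x = x)
    (hcont : ContinuousOn (fun p : ℝ × X × X => δ p.1 p.2.1 p.2.2) {p | 0 < p.1})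
    (hlim0 : ∀ x y : X, Tendsto (fun ε : ℝ => δ ε x y) (𝓝[>] (0 : ℝ)) (𝓝 x))
    (hcomp' : ∀ ε μ : ℝ, 0 < ε → 0 < μ → ∀ x y : X, δ' ε x (δ' μ x y) = δ' (ε * μ) x y)
    (hone' : ∀ x y : X, δ' 1 x y = y)
    (hfix' : ∀ ε : ℝ, 0 < ε → ∀ x : X, δ' ε x x = x)
    (hcont' : ContinuousOn (fun p : ℝ × X × X => δ' p.1 p.2.1 p.2.2) {p | 0 < p.1})
    (hlim0' : ∀ x y : X, Tendsto (fun ε : ℝ => δ' ε x y) (𝓝[>] (0 : ℝ)) (𝓝 x))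
    (P Q : X → X → X)
    (hP : ∀ K : Set (X × X), IsCompact K →
      TendstoUniformlyOn (fun (ε : ℝ) (p : X × X) => δ ε⁻¹ p.1 (δ' ε p.1 p.2))
        (fun p => P p.1 p.2) (𝓝[>] (0 : ℝ)) K)
    (hQ : ∀ K : Set (X × X), IsCompact K →
      TendstoUniformlyOn (fun (ε : ℝ) (p : X × X) => δ' ε⁻¹ p.1 (δ ε p.1 p.2))
        (fun p => Q p.1 p.2) (𝓝[>] (0 : ℝ)) K)
    (SigL SigL' : X → X → X → X)
    (hSig : ∀ K : Set (X × X × X), IsCompact K →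
      TendstoUniformlyOn
        (fun (ε : ℝ) (p : X × X × X) => δ ε⁻¹ p.1 (δ ε (δ ε p.1 p.2.1) p.2.2))
        (fun p => SigL p.1 p.2.1 p.2.2) (𝓝[>] (0 : ℝ)) K)
    (hSig' : ∀ K : Set (X × X × X), IsCompact K →
      TendstoUniformlyOn
        (fun (ε : ℝ) (p : X × X × X) => δ' ε⁻¹ p.1 (δ' ε (δ' ε p.1 p.2.1) p.2.2))
        (fun p => SigL' p.1 p.2.1 p.2.2) (𝓝[>] (0 : ℝ)) K)
    (hQcont : ∀ x : X, Continuous (Q x)) :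
    ∀ x u v : X, SigL' x u v = Q x (SigL x (P x u) (P x v)) := by
  -- continuity of the fixed-parameter dilatations
  have hopen : IsOpen {p : ℝ × X × X | 0 < p.1} :=
    isOpen_lt continuous_const continuous_fst
  have hδc : ∀ ε : ℝ, 0 < ε → Continuous fun p : X × X => δ ε p.1 p.2 := by
    intro ε hε
    refine continuous_iff_continuousAt.mpr fun p => ?_
    exact (hcont.continuousAt (hopen.mem_nhds (show (ε, p) ∈ {q : ℝ × X × X | 0 < q.1} from hε))).comp
      ((continuous_const.prodMk continuous_id).continuousAt)
  have hδ'c : ∀ ε : ℝ, 0 < ε → Continuous fun p : X × X => δ' ε p.1 p.2 := by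
    intro ε hε
    refine continuous_iff_continuousAt.mpr fun p => ?_
    exact (hcont'.continuousAt (hopen.mem_nhds (show (ε, p) ∈ {q : ℝ × X × X | 0 < q.1} from hε))).comp
      ((continuous_const.prodMk continuous_id).continuousAt)
  have hpos : ∀ᶠ ε in 𝓝[>] (0 : ℝ), 0 < ε := eventually_mem_nhdsWithin
  intro x u v
  set l := 𝓝[>] (0 : ℝ) with hl
  haveI : l.NeBot := by rw [hl]; infer_instance
  -- continuity of the εapproximants
  have hPc : ∀ᶠ ε in l, Continuous fun p : X × X => δ ε⁻¹ p.1 (δ' ε p.1 p.2) := by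
    filter_upwards [hpos] with ε hε
    exact (hδc ε⁻¹ (by positivity)).comp
      (continuous_fst.prodMk (hδ'c ε hε))
  have hQc : ∀ᶠ ε in l, Continuous fun p : X × X => δ' ε⁻¹ p.1 (δ ε p.1 p.2) := by
    filter_upwards [hpos] with ε hε
    exact (hδ'c ε⁻¹ (by positivity)).comp
      (continuous_fst.prodMk (hδc ε hε))
  have hSc : ∀ᶠ ε in l,
      Continuous fun p : X × X × X => δ ε⁻¹ p.1 (δ ε (δ ε p.1 p.2.1) p.2.2) := by
    filter_upwards [hpos] with ε hε
    have h1 : Continuous fun p : X × X × X => δ ε p.1 p.2.1 :=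
      (hδc ε hε).comp (continuous_fst.prodMk (continuous_fst.comp continuous_snd))
    have h2 : Continuous fun p : X × X × X => δ ε (δ ε p.1 p.2.1) p.2.2 :=
      (hδc ε hε).comp (h1.prodMk (continuous_snd.comp continuous_snd))
    exact (hδc ε⁻¹ (by positivity)).comp (continuous_fst.prodMk h2)
  -- the moving points
  have hy : Tendsto (fun ε : ℝ => δ' ε x u) l (𝓝 x) := hlim0' x u
  have hg1 : Tendsto (fun ε : ℝ => δ ε⁻¹ x (δ' ε x u)) l (𝓝 (P x u)) :=
    (hP {(x, u)} isCompact_singleton).tendsto_at rfl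
  have hg2 : Tendsto (fun ε : ℝ => δ ε⁻¹ (δ' ε x u) (δ' ε (δ' ε x u) v)) l
      (𝓝 (P x v)) := by
    have := aux_comp_tendsto hP hPc (g := fun ε => (δ' ε x u, v)) (a := (x, v))
      (hy.prodMk_nhds tendsto_const_nhds)
    exact this
  have hw : Tendsto (fun ε : ℝ =>
      δ ε⁻¹ x (δ ε (δ ε x (δ ε⁻¹ x (δ' ε x u)))
        (δ ε⁻¹ (δ' ε x u) (δ' ε (δ' ε x u) v)))) l
      (𝓝 (SigL x (P x u) (P x v))) := by
    have := aux_comp_tendsto hSig hSc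
      (g := fun ε => (x, δ ε⁻¹ x (δ' ε x u), δ ε⁻¹ (δ' ε x u) (δ' ε (δ' ε x u) v)))
      (a := (x, P x u, P x v))
      (tendsto_const_nhds.prodMk_nhds (hg1.prodMk_nhds hg2))
    exact this
  have hfinal : Tendsto (fun ε : ℝ =>
      δ' ε⁻¹ x (δ ε x (δ ε⁻¹ x (δ ε (δ ε x (δ ε⁻¹ x (δ' ε x u)))
        (δ ε⁻¹ (δ' ε x u) (δ' ε (δ' ε x u) v)))))) l
      (𝓝 (Q x (SigL x (P x u) (P x v)))) := by
    have := aux_comp_tendsto hQ hQc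
      (g := fun ε => (x, δ ε⁻¹ x (δ ε (δ ε x (δ ε⁻¹ x (δ' ε x u)))
        (δ ε⁻¹ (δ' ε x u) (δ' ε (δ' ε x u) v)))))
      (a := (x, SigL x (P x u) (P x v)))
      (tendsto_const_nhds.prodMk_nhds hw)
    exact this
  have hlhs : Tendsto (fun ε : ℝ => δ' ε⁻¹ x (δ' ε (δ' ε x u) v)) l
      (𝓝 (SigL' x u v)) :=
    (hSig' {(x, u, v)} isCompact_singleton).tendsto_at rfl
  -- algebraic identity for positive ε
  have heq : ∀ᶠ ε in l, δ' ε⁻¹ x (δ' ε (δ' ε x u) v) =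
      δ' ε⁻¹ x (δ ε x (δ ε⁻¹ x (δ ε (δ ε x (δ ε⁻¹ x (δ' ε x u)))
        (δ ε⁻¹ (δ' ε x u) (δ' ε (δ' ε x u) v))))) := by
    filter_upwards [hpos] with ε hε
    have hεinv : (0:ℝ) < ε⁻¹ := by positivity
    have cancel : ∀ z w : X, δ ε z (δ ε⁻¹ z w) = w := by
      intro z w
      rw [hcomp ε ε⁻¹ hε hεinv, mul_inv_cancel₀ (ne_of_gt hε), hone]
    rw [cancel x (δ' ε x u), cancel (δ' ε x u) (δ' ε (δ' ε x u) v),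
      cancel x (δ' ε (δ' ε x u) v)]
  exact tendsto_nhds_unique (hlhs.congr' heq) hfinal
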